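/- Let a, c > 0 and b ∈ ℝ, and define β(s) = c·exp(−(a·log s + b)²) for s ≥ exp(−b/a) and β(s) = c for 0 ≤ s < exp(−b/a). Then for every δ > 1 there exist C > 0 and v₀ ∈ (0, 1) such that K*(v) ≥ C·v·exp((−√(−δ·log v) + b)/a) for all v ∈ (0, v₀]. Moreover, for every δ > 1 there exists C̃ > 0 such that for all integers n ≥ 1, F⁻¹(n) ≤ C̃·exp(−(a²/δ)·log²(n)). -/

import Mathlib

open MeasureTheory ENNReal

noncomputable section

/-- `K*(v) = sup_{u>0} (u·v − u·β(1/u))`, valued in `[0,∞]`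
(the truncation at `0` is harmless since the supremum is nonnegative for `v ≥ 0`). -/
def Kstar (β : ℝ → ℝ) (v : ℝ) : ℝ≥0∞ :=
  ⨆ (u : ℝ) (_ : 0 < u), ENNReal.ofReal (u * v - u * β (1 / u))

/-- `F(x) = ∫_x^{1/4} dv / K*(v)`, valued in `[0,∞]`. -/
def Ffun (β : ℝ → ℝ) (x : ℝ) : ℝ≥0∞ :=
  ∫⁻ v in Set.Ioc x (1 / 4 : ℝ), (Kstar β v)⁻¹

private lemma my_sqrt_add_le (x y : ℝ) (hx : 0 ≤ x) (hy : 0 ≤ y) :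
    Real.sqrt (x + y) ≤ Real.sqrt x + Real.sqrt y := by
  have h1 := Real.sqrt_nonneg x
  have h2 := Real.sqrt_nonneg y
  have hxy : x + y ≤ (Real.sqrt x + Real.sqrt y) ^ 2 := by
    have e1 := Real.sq_sqrt hx
    have e2 := Real.sq_sqrt hy
    nlinarith [mul_nonneg h1 h2]
  calc Real.sqrt (x + y) ≤ Real.sqrt ((Real.sqrt x + Real.sqrt y) ^ 2) :=
        Real.sqrt_le_sqrt hxy
    _ = Real.sqrt x + Real.sqrt y := Real.sqrt_sq (by positivity)

private lemma Kstar_ge_of (β : ℝ → ℝ) (v u t : ℝ) (hu : 0 < u)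
    (h : t ≤ u * v - u * β (1 / u)) : ENNReal.ofReal t ≤ Kstar β v :=
  le_trans (ENNReal.ofReal_le_ofReal h) (le_iSup₂_of_le u hu le_rfl)

private lemma beta_val (a c : ℝ) (ha : 0 < a) (hc : 0 < c) (b : ℝ) (β : ℝ → ℝ)
    (hβ : ∀ s : ℝ, 0 ≤ s →
      β s = if s < Real.exp (-b / a) then c else c * Real.exp (-(a * Real.log s + b) ^ 2))
    (v : ℝ) (hv0 : 0 < v) (hv2c : v ≤ 2 * c) :
    β (1 / Real.exp ((b - Real.sqrt (Real.log (2 * c) - Real.log v)) / a)) = v / 2 := by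
  have h2c : (0 : ℝ) < 2 * c := by linarith
  set L : ℝ := Real.log (2 * c) - Real.log v with hLdef
  have hL0 : 0 ≤ L := by
    have := Real.log_le_log hv0 hv2c
    simp only [hLdef]; linarith
  have hs : (1 : ℝ) / Real.exp ((b - Real.sqrt L) / a)
      = Real.exp ((Real.sqrt L - b) / a) := by
    rw [one_div, ← Real.exp_neg]
    ring_nf
  rw [hs, hβ _ (Real.exp_pos _).le]
  have hnotlt : ¬ Real.exp ((Real.sqrt L - b) / a) < Real.exp (-b / a) := by
    rw [not_lt, Real.exp_le_exp]
    have h := Real.sqrt_nonneg L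
    rw [div_le_div_iff₀ ha ha]
    nlinarith
  rw [if_neg hnotlt, Real.log_exp]
  have harg : a * ((Real.sqrt L - b) / a) + b = Real.sqrt L := by
    field_simp
    ring
  rw [harg, Real.sq_sqrt hL0]
  have hexp : Real.exp (-L) = v / (2 * c) := by
    rw [hLdef, neg_sub, Real.exp_sub, Real.exp_log hv0, Real.exp_log h2c]
  rw [hexp]
  field_simp

/-- First part: the lower bound on `K*` with constant `C = 1/2`. -/
private lemma part1 (a c : ℝ) (ha : 0 < a) (hc : 0 < c) (b : ℝ) (β : ℝ → ℝ)
    (hβ : ∀ s : ℝ, 0 ≤ s →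
      β s = if s < Real.exp (-b / a) then c else c * Real.exp (-(a * Real.log s + b) ^ 2))
    (δ : ℝ) (hδ : 1 < δ) :
    ∃ v₀ : ℝ, 0 < v₀ ∧ v₀ < 1 ∧ ∀ v : ℝ, 0 < v → v ≤ v₀ →
      ENNReal.ofReal ((1/2 : ℝ) * v * Real.exp ((-Real.sqrt (-(δ * Real.log v)) + b) / a)) ≤
        Kstar β v := by
  have h2c : (0 : ℝ) < 2 * c := by linarith
  refine ⟨min (1/2) (min (2*c) (Real.exp (-(max 0 (Real.log (2*c))) / (δ - 1)))), ?_, ?_, ?_⟩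
  · positivity
  · exact lt_of_le_of_lt (min_le_left _ _) (by norm_num)
  intro v hv0 hv₀
  have hv12 : v ≤ 1/2 := le_trans hv₀ (min_le_left _ _)
  have hv2c : v ≤ 2 * c := le_trans hv₀ (le_trans (min_le_right _ _) (min_le_left _ _))
  have hvE : v ≤ Real.exp (-(max 0 (Real.log (2*c))) / (δ - 1)) :=
    le_trans hv₀ (le_trans (min_le_right _ _) (min_le_right _ _))
  have hlogv : Real.log v ≤ -(max 0 (Real.log (2*c))) / (δ - 1) :=
    (Real.log_le_iff_le_exp hv0).2 hvE
  have hlogv0 : Real.log v ≤ 0 := Real.log_nonpos hv0.le (by linarith)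
  set L : ℝ := Real.log (2 * c) - Real.log v with hLdef
  set u : ℝ := Real.exp ((b - Real.sqrt L) / a) with hudef
  have hu : 0 < u := Real.exp_pos _
  have hβu : β (1 / u) = v / 2 := beta_val a c ha hc b β hβ v hv0 hv2c
  have hLle : L ≤ -(δ * Real.log v) := by
    have hM : Real.log (2*c) ≤ max 0 (Real.log (2*c)) := le_max_right _ _
    have hδ1 : (0:ℝ) < δ - 1 := by linarith
    have h1 : Real.log v ≤ -(max 0 (Real.log (2*c)) / (δ - 1)) := by
      rw [← neg_div]; exact hlogv
    have h2 : max 0 (Real.log (2*c)) / (δ - 1) ≤ -Real.log v := by linarith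
    have h3 : max 0 (Real.log (2*c)) ≤ -Real.log v * (δ - 1) := (div_le_iff₀ hδ1).1 h2
    simp only [hLdef]
    nlinarith
  have hsqrt : Real.sqrt L ≤ Real.sqrt (-(δ * Real.log v)) := Real.sqrt_le_sqrt hLle
  apply Kstar_ge_of β v u _ hu
  rw [hβu]
  have hexple : Real.exp ((-Real.sqrt (-(δ * Real.log v)) + b) / a)
      ≤ Real.exp ((b - Real.sqrt L) / a) := by
    rw [Real.exp_le_exp, div_le_div_iff₀ ha ha]
    nlinarith
  have : (1/2 : ℝ) * v * Real.exp ((-Real.sqrt (-(δ * Real.log v)) + b) / a)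
      ≤ (1/2 : ℝ) * v * u := by
    rw [hudef]
    nlinarith [Real.exp_pos ((-Real.sqrt (-(δ * Real.log v)) + b) / a)]
  linarith

private lemma evt_bound (K₁ K₂ s : ℝ) (hs : 0 < s) :
    ∀ᶠ x : ℝ in Filter.atTop, K₁ * Real.log x ^ 2 + K₂ ≤ x ^ s := by
  have base : (fun x : ℝ => Real.log x ^ (2:ℕ)) =o[Filter.atTop] fun x : ℝ => x ^ s := by
    simpa [Real.rpow_natCast] using isLittleO_log_rpow_rpow_atTop ((2:ℕ) : ℝ) hs
  have h1 := (base.const_mul_left K₁).def (by norm_num : (0:ℝ) < 1/2)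
  have h2 := (tendsto_rpow_atTop hs).eventually_ge_atTop (2 * K₂)
  filter_upwards [h1, h2, Filter.eventually_ge_atTop (1:ℝ)] with x hx1 hx2 hx3
  have hxpos : (0:ℝ) < x := by linarith
  have hrnn : 0 ≤ x ^ s := Real.rpow_nonneg hxpos.le s
  have hb1 : K₁ * Real.log x ^ 2 ≤ 1/2 * x ^ s := by
    calc K₁ * Real.log x ^ 2 ≤ ‖K₁ * Real.log x ^ 2‖ := le_abs_self _
      _ ≤ 1/2 * ‖x ^ s‖ := hx1
      _ = 1/2 * x ^ s := by rw [Real.norm_eq_abs, abs_of_nonneg hrnn]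
  linarith

set_option maxHeartbeats 2000000 in
theorem stmt19
    (a c : ℝ) (ha : 0 < a) (hc : 0 < c) (b : ℝ)
    (β : ℝ → ℝ)
    (hβ : ∀ s : ℝ, 0 ≤ s →
      β s = if s < Real.exp (-b / a) then c else c * Real.exp (-(a * Real.log s + b) ^ 2)) :
    (∀ δ : ℝ, 1 < δ → ∃ C : ℝ, 0 < C ∧ ∃ v₀ : ℝ, 0 < v₀ ∧ v₀ < 1 ∧
      ∀ v : ℝ, 0 < v → v ≤ v₀ →
        ENNReal.ofReal (C * v * Real.exp ((-Real.sqrt (-(δ * Real.log v)) + b) / a)) ≤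
          Kstar β v) ∧
    (∀ δ : ℝ, 1 < δ → ∃ Ct : ℝ, 0 < Ct ∧
      ∀ n : ℕ, 1 ≤ n →
        Ffun β (Ct * Real.exp (-(a ^ 2 / δ) * (Real.log n) ^ 2)) ≤ (n : ℝ≥0∞)) := by
  constructor
  · intro δ hδ
    obtain ⟨v₀, hv₀0, hv₀1, hbd⟩ := part1 a c ha hc b β hβ δ hδ
    exact ⟨1/2, by norm_num, v₀, hv₀0, hv₀1, hbd⟩
  · intro δ hδ
    obtain ⟨δ', hδ'def⟩ : ∃ t : ℝ, t = (1 + δ) / 2 := ⟨_, rfl⟩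
    have hδ'1 : 1 < δ' := by rw [hδ'def]; linarith
    have hδ'δ : δ' < δ := by rw [hδ'def]; linarith
    have hδ'0 : 0 < δ' := by linarith
    have hδ0 : (0:ℝ) < δ := by linarith
    obtain ⟨v₀, hv₀0, hv₀1, hKb⟩ := part1 a c ha hc b β hβ δ' hδ'1
    obtain ⟨v₁, hv₁def⟩ : ∃ t : ℝ, t = min v₀ (1/4 : ℝ) := ⟨_, rfl⟩
    have hv₁0 : 0 < v₁ := by rw [hv₁def]; exact lt_min hv₀0 (by norm_num)
    have hv₁v₀ : v₁ ≤ v₀ := by rw [hv₁def]; exact min_le_left _ _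
    have hv₁4 : v₁ ≤ 1/4 := by rw [hv₁def]; exact min_le_right _ _
    have hv₁1 : v₁ < 1 := lt_of_le_of_lt hv₁4 (by norm_num)
    -- crude lower bound for v ∈ (v₁, 1/4]
    obtain ⟨w, hwdef⟩ : ∃ t : ℝ, t = min v₁ c := ⟨_, rfl⟩
    have hw0 : 0 < w := by rw [hwdef]; exact lt_min hv₁0 hc
    have hw2c : w ≤ 2 * c := by rw [hwdef]; exact le_trans (min_le_right _ _) (by linarith)
    have hwv₁ : w ≤ v₁ := by rw [hwdef]; exact min_le_left _ _
    obtain ⟨u₀, hu₀def⟩ :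
        ∃ t : ℝ, t = Real.exp ((b - Real.sqrt (Real.log (2*c) - Real.log w)) / a) := ⟨_, rfl⟩
    have hu₀ : 0 < u₀ := by rw [hu₀def]; exact Real.exp_pos _
    have hβu₀ : β (1 / u₀) = w / 2 := by
      rw [hu₀def]; exact beta_val a c ha hc b β hβ w hw0 hw2c
    have crude : ∀ v ∈ Set.Ioc v₁ (1/4 : ℝ), ENNReal.ofReal (u₀ * v₁ / 2) ≤ Kstar β v := by
      intro v hv
      apply Kstar_ge_of β v u₀ _ hu₀
      rw [hβu₀]
      nlinarith [mul_nonneg hu₀.le (show (0:ℝ) ≤ v - w/2 - v₁/2 by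
        have := hv.1; linarith)]
    obtain ⟨E', hE'def⟩ : ∃ t : ℝ, t = (u₀ * v₁ / 2)⁻¹ * (1/4) := ⟨_, rfl⟩
    have hE'0 : 0 < E' := by rw [hE'def]; positivity
    have hB : ∫⁻ v in Set.Ioc v₁ (1/4 : ℝ), (Kstar β v)⁻¹ ≤ ENNReal.ofReal E' := by
      have huv : (0:ℝ) < u₀ * v₁ / 2 := by positivity
      calc ∫⁻ v in Set.Ioc v₁ (1/4 : ℝ), (Kstar β v)⁻¹
          ≤ ∫⁻ _ in Set.Ioc v₁ (1/4 : ℝ), (ENNReal.ofReal (u₀ * v₁ / 2))⁻¹ :=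
            setLIntegral_mono measurable_const (fun v hv => ENNReal.inv_le_inv' (crude v hv))
        _ = (ENNReal.ofReal (u₀ * v₁ / 2))⁻¹ * volume (Set.Ioc v₁ (1/4 : ℝ)) :=
            setLIntegral_const _ _
        _ ≤ (ENNReal.ofReal (u₀ * v₁ / 2))⁻¹ * ENNReal.ofReal (1/4) := by
            gcongr
            rw [Real.volume_Ioc]
            exact ENNReal.ofReal_le_ofReal (by linarith)
        _ = ENNReal.ofReal E' := by
            rw [← ENNReal.ofReal_inv_of_pos huv, ← ENNReal.ofReal_mul (by positivity), hE'def]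
    -- main estimate
    have main : ∀ x : ℝ, 0 < x → x < v₁ →
        Ffun β x ≤ ENNReal.ofReal
          (2 * Real.exp ((Real.sqrt (-(δ' * Real.log x)) - b) / a) * (-Real.log x) + E') := by
      intro x hx0 hxv₁
      obtain ⟨M, hMdef⟩ :
          ∃ t : ℝ, t = 2 * Real.exp ((Real.sqrt (-(δ' * Real.log x)) - b) / a) := ⟨_, rfl⟩
      have hM0 : 0 < M := by rw [hMdef]; positivity
      have hlogx0 : Real.log x ≤ 0 := Real.log_nonpos hx0.le (by linarith)
      have hA : ∫⁻ v in Set.Ioc x v₁, (Kstar β v)⁻¹ ≤ ENNReal.ofReal (M * (-Real.log x)) := by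
        have hpt : ∀ v ∈ Set.Ioc x v₁, (Kstar β v)⁻¹ ≤ ENNReal.ofReal (M / v) := by
          intro v hv
          have hv0 : 0 < v := lt_trans hx0 hv.1
          have h1 := hKb v hv0 (le_trans hv.2 hv₁v₀)
          have hq : (0:ℝ) < (1/2 : ℝ) * v *
              Real.exp ((-Real.sqrt (-(δ' * Real.log v)) + b) / a) := by positivity
          have hSS : Real.sqrt (-(δ' * Real.log v)) ≤ Real.sqrt (-(δ' * Real.log x)) := by
            apply Real.sqrt_le_sqrt
            have := Real.log_le_log hx0 hv.1.le
            nlinarith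
          have hqinv : ((1/2 : ℝ) * v *
                Real.exp ((-Real.sqrt (-(δ' * Real.log v)) + b) / a))⁻¹
              = 2 / v * Real.exp ((Real.sqrt (-(δ' * Real.log v)) - b) / a) := by
            rw [show (Real.sqrt (-(δ' * Real.log v)) - b) / a
                = -((-Real.sqrt (-(δ' * Real.log v)) + b) / a) by ring, Real.exp_neg]
            field_simp
          calc (Kstar β v)⁻¹
              ≤ (ENNReal.ofReal ((1/2 : ℝ) * v *
                  Real.exp ((-Real.sqrt (-(δ' * Real.log v)) + b) / a)))⁻¹ :=
                ENNReal.inv_le_inv' h1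
            _ = ENNReal.ofReal (((1/2 : ℝ) * v *
                  Real.exp ((-Real.sqrt (-(δ' * Real.log v)) + b) / a))⁻¹) :=
                (ENNReal.ofReal_inv_of_pos hq).symm
            _ ≤ ENNReal.ofReal (M / v) := by
                apply ENNReal.ofReal_le_ofReal
                rw [hqinv, hMdef, div_mul_eq_mul_div]
                gcongr
        have hInt : IntegrableOn (fun v => M / v) (Set.Ioc x v₁) := by
          have hci : ContinuousOn (fun v : ℝ => M / v) (Set.uIcc x v₁) := by
            apply continuousOn_const.div continuousOn_id
            intro z hz
            rw [Set.uIcc_of_le hxv₁.le] at hz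
            exact ne_of_gt (lt_of_lt_of_le hx0 hz.1)
          exact (intervalIntegrable_iff_integrableOn_Ioc_of_le hxv₁.le).1
            hci.intervalIntegrable
        have hnn : 0 ≤ᵐ[volume.restrict (Set.Ioc x v₁)] fun v => M / v := by
          filter_upwards [ae_restrict_mem measurableSet_Ioc] with v hv
          exact div_nonneg hM0.le (le_of_lt (lt_trans hx0 hv.1))
        have hval : ∫ v in Set.Ioc x v₁, M / v = M * (Real.log v₁ - Real.log x) := by
          rw [← intervalIntegral.integral_of_le hxv₁.le]
          have : ∀ v : ℝ, M / v = M * (1 / v) := fun v => by ring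
          simp_rw [this]
          rw [intervalIntegral.integral_const_mul, integral_one_div ?h0]
          · rw [Real.log_div (ne_of_gt hv₁0) (ne_of_gt hx0)]
          · rw [Set.uIcc_of_le hxv₁.le]
            intro hmem
            exact absurd hmem.1 (by linarith)
        calc ∫⁻ v in Set.Ioc x v₁, (Kstar β v)⁻¹
            ≤ ∫⁻ v in Set.Ioc x v₁, ENNReal.ofReal (M / v) :=
              setLIntegral_mono (by fun_prop) hpt
          _ = ENNReal.ofReal (∫ v in Set.Ioc x v₁, M / v) :=
              (ofReal_integral_eq_lintegral_ofReal hInt hnn).symm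
          _ ≤ ENNReal.ofReal (M * (-Real.log x)) := by
              rw [hval]
              apply ENNReal.ofReal_le_ofReal
              have : Real.log v₁ ≤ 0 := Real.log_nonpos hv₁0.le hv₁1.le
              nlinarith
      calc Ffun β x ≤ (∫⁻ v in Set.Ioc x v₁, (Kstar β v)⁻¹)
            + ∫⁻ v in Set.Ioc v₁ (1/4 : ℝ), (Kstar β v)⁻¹ := by
            rw [Ffun, ← Set.Ioc_union_Ioc_eq_Ioc hxv₁.le hv₁4]
            exact lintegral_union_le _ _ _
        _ ≤ ENNReal.ofReal (M * (-Real.log x)) + ENNReal.ofReal E' := add_le_add hA hB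
        _ = ENNReal.ofReal (M * (-Real.log x) + E') := by
            rw [ENNReal.ofReal_add (by nlinarith) hE'0.le]
        _ = ENNReal.ofReal
            (2 * Real.exp ((Real.sqrt (-(δ' * Real.log x)) - b) / a) * (-Real.log x) + E') := by
            rw [hMdef]
    -- the sequence y n and the eventual inequality
    obtain ⟨y, hydef⟩ :
        ∃ f : ℕ → ℝ, f = fun n : ℕ =>
          Real.exp (-(a^2/δ) * (Real.log n) ^ 2 - Real.log 4) := ⟨_, rfl⟩
    have hy0 : ∀ n : ℕ, 0 < y n := fun n => by rw [hydef]; exact Real.exp_pos _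
    have hylog : ∀ n : ℕ, Real.log (y n) = -((a^2/δ) * (Real.log n) ^ 2 + Real.log 4) := by
      intro n; rw [hydef]; simp only [Real.log_exp]; ring
    have hlog4 : (0:ℝ) < Real.log 4 := Real.log_pos (by norm_num)
    obtain ⟨θ, hθdef⟩ : ∃ t : ℝ, t = Real.sqrt (δ'/δ) := ⟨_, rfl⟩
    have hθ0 : 0 < θ := by rw [hθdef]; exact Real.sqrt_pos.2 (by positivity)
    have hθsq : θ ^ 2 = δ'/δ := by rw [hθdef]; exact Real.sq_sqrt (by positivity)
    have hθ1 : θ < 1 := by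
      rw [hθdef, show (1:ℝ) = Real.sqrt 1 by rw [Real.sqrt_one]]
      exact Real.sqrt_lt_sqrt (by positivity) ((div_lt_one hδ0).2 hδ'δ)
    obtain ⟨s₀, hs₀def⟩ : ∃ t : ℝ, t = Real.sqrt (δ' * Real.log 4) := ⟨_, rfl⟩
    obtain ⟨κ, hκdef⟩ : ∃ t : ℝ, t = Real.exp ((s₀ - b) / a) := ⟨_, rfl⟩
    have hκ0 : 0 < κ := by rw [hκdef]; exact Real.exp_pos _
    obtain ⟨K₁, hK₁def⟩ : ∃ t : ℝ, t = 2 * κ * (a^2/δ) := ⟨_, rfl⟩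
    obtain ⟨K₂, hK₂def⟩ : ∃ t : ℝ, t = 2 * κ * Real.log 4 + E' := ⟨_, rfl⟩
    have hev : ∀ᶠ n : ℕ in Filter.atTop, (y n < v₁ ∧
        2 * Real.exp ((Real.sqrt (-(δ' * Real.log (y n))) - b) / a) * (-Real.log (y n)) + E'
          ≤ (n : ℝ)) := by
      have hlogsq : Filter.Tendsto (fun n : ℕ => Real.log n ^ 2) Filter.atTop Filter.atTop :=
        (Filter.tendsto_pow_atTop (two_ne_zero)).comp
          (Real.tendsto_log_atTop.comp tendsto_natCast_atTop_atTop)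
      have htend : Filter.Tendsto y Filter.atTop (nhds 0) := by
        rw [hydef]
        apply Real.tendsto_exp_atBot.comp
        apply Filter.tendsto_atBot_add_const_right
        have hneg : -(a^2/δ) < 0 := by
          have : (0:ℝ) < a^2/δ := by positivity
          linarith
        exact (Filter.tendsto_const_mul_atBot_of_neg hneg).2 hlogsq
      have h1 : ∀ᶠ n : ℕ in Filter.atTop, y n < v₁ := htend.eventually (gt_mem_nhds hv₁0)
      have h2 : ∀ᶠ x : ℝ in Filter.atTop, K₁ * Real.log x ^ 2 + K₂ ≤ x ^ (1 - θ) :=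
        evt_bound K₁ K₂ (1 - θ) (by linarith)
      have h2n : ∀ᶠ n : ℕ in Filter.atTop,
          K₁ * Real.log (n:ℝ) ^ 2 + K₂ ≤ (n:ℝ) ^ (1 - θ) :=
        tendsto_natCast_atTop_atTop.eventually h2
      filter_upwards [h1, h2n, Filter.eventually_ge_atTop 1] with n hn1 hn2 hn3
      refine ⟨hn1, ?_⟩
      have hn0 : (0:ℝ) < n := by exact_mod_cast hn3
      have hn1' : (1:ℝ) ≤ n := by exact_mod_cast hn3
      have hlogn0 : 0 ≤ Real.log n := Real.log_nonneg hn1'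
      obtain ⟨T, hTdef⟩ : ∃ t : ℝ, t = (a^2/δ) * (Real.log n) ^ 2 + Real.log 4 := ⟨_, rfl⟩
      have hT0 : 0 ≤ T := by rw [hTdef]; positivity
      have hylogn : Real.log (y n) = -T := by rw [hylog n, hTdef]
      rw [hylogn]
      have hδT : -(δ' * -T) = δ' * (a^2/δ) * Real.log n ^ 2 + δ' * Real.log 4 := by
        rw [hTdef]; ring
      have hsqrtsplit : Real.sqrt (-(δ' * -T)) ≤ a * θ * Real.log n + s₀ := by
        rw [hδT]
        calc Real.sqrt (δ' * (a^2/δ) * Real.log n ^ 2 + δ' * Real.log 4)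
            ≤ Real.sqrt (δ' * (a^2/δ) * Real.log n ^ 2) + Real.sqrt (δ' * Real.log 4) :=
              my_sqrt_add_le _ _ (by positivity) (by positivity)
          _ = a * θ * Real.log n + s₀ := by
              rw [hs₀def]
              congr 1
              rw [show δ' * (a^2/δ) * Real.log n ^ 2 = (a * θ * Real.log n)^2 from by
                calc δ' * (a^2/δ) * Real.log n ^ 2 = a^2 * (δ'/δ) * Real.log n ^ 2 := by ring
                  _ = a^2 * θ^2 * Real.log n ^ 2 := by rw [hθsq]
                  _ = (a * θ * Real.log n)^2 := by ring]
              exact Real.sqrt_sq (by positivity)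
      have hexpb : Real.exp ((Real.sqrt (-(δ' * -T)) - b) / a) ≤ (n:ℝ) ^ θ * κ := by
        have heq : Real.exp ((a * θ * Real.log n + s₀ - b) / a)
            = (n:ℝ) ^ θ * κ := by
          rw [show (a * θ * Real.log n + s₀ - b) / a = θ * Real.log n + (s₀ - b)/a by
            field_simp; ring]
          rw [Real.exp_add, hκdef, Real.rpow_def_of_pos hn0]
          ring_nf
        rw [← heq, Real.exp_le_exp]
        gcongr
      have hrpow0 : (0:ℝ) ≤ (n:ℝ) ^ θ := Real.rpow_nonneg hn0.le θ
      have hrpow1 : (1:ℝ) ≤ (n:ℝ) ^ θ := Real.one_le_rpow hn1' hθ0.le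
      have step1 : 2 * Real.exp ((Real.sqrt (-(δ' * -T)) - b) / a) * (- -T) + E'
          ≤ (n:ℝ) ^ θ * (K₁ * Real.log n ^ 2 + K₂) := by
        rw [neg_neg]
        have e1 : 2 * Real.exp ((Real.sqrt (-(δ' * -T)) - b) / a) * T
            ≤ 2 * ((n:ℝ)^θ * κ) * T :=
          mul_le_mul_of_nonneg_right (by linarith) hT0
        have e2 : E' ≤ (n:ℝ)^θ * E' := le_mul_of_one_le_left hE'0.le hrpow1
        have e3 : 2 * ((n:ℝ)^θ * κ) * T + (n:ℝ)^θ * E'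
            = (n:ℝ)^θ * (K₁ * Real.log n ^ 2 + K₂) := by
          rw [hK₁def, hK₂def, hTdef]; ring
        linarith
      have step2 : (n:ℝ) ^ θ * (K₁ * Real.log n ^ 2 + K₂) ≤ (n:ℝ) := by
        calc (n:ℝ) ^ θ * (K₁ * Real.log n ^ 2 + K₂) ≤ (n:ℝ)^θ * (n:ℝ)^(1-θ) :=
              mul_le_mul_of_nonneg_left hn2 hrpow0
          _ = (n:ℝ) := by
              rw [← Real.rpow_add hn0]
              norm_num
      linarith
    obtain ⟨N₀, hN₀⟩ := Filter.eventually_atTop.1 hev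
    obtain ⟨N, hNdef⟩ : ∃ m : ℕ, m = max N₀ 1 := ⟨_, rfl⟩
    have hN1 : 1 ≤ N := by rw [hNdef]; exact le_max_right _ _
    have hN : ∀ n : ℕ, N ≤ n → (y n < v₁ ∧
        2 * Real.exp ((Real.sqrt (-(δ' * Real.log (y n))) - b) / a) * (-Real.log (y n)) + E'
          ≤ (n : ℝ)) := fun n hn => hN₀ n (le_trans (by rw [hNdef] at hn; exact le_trans (le_max_left _ _) hn) le_rfl)
    obtain ⟨Ct, hCtdef⟩ : ∃ t : ℝ, t = (1/4) * Real.exp ((a^2/δ) * (Real.log N) ^ 2) := ⟨_, rfl⟩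
    have hCt0 : 0 < Ct := by rw [hCtdef]; positivity
    refine ⟨Ct, hCt0, ?_⟩
    intro n hn
    obtain ⟨xn, hxndef⟩ : ∃ t : ℝ, t = Ct * Real.exp (-(a ^ 2 / δ) * (Real.log n) ^ 2) :=
      ⟨_, rfl⟩
    rw [← hxndef]
    by_cases hcase : n < N
    · -- small n : the integration domain is empty
      have hxn14 : (1/4 : ℝ) ≤ xn := by
        rw [hxndef, hCtdef]
        have hlogle : Real.log (n:ℝ) ≤ Real.log (N:ℝ) := by
          apply Real.log_le_log (by exact_mod_cast hn)
          exact_mod_cast hcase.le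
        have hlogn0 : 0 ≤ Real.log (n:ℝ) := Real.log_nonneg (by exact_mod_cast hn)
        have h1 : (1:ℝ) ≤ Real.exp ((a^2/δ) * (Real.log N) ^ 2) *
            Real.exp (-(a ^ 2 / δ) * (Real.log n) ^ 2) := by
          rw [← Real.exp_add]
          apply Real.one_le_exp
          have hsq : Real.log (n:ℝ) ^ 2 ≤ Real.log (N:ℝ) ^ 2 :=
            pow_le_pow_left₀ hlogn0 hlogle 2
          have hpos : (0:ℝ) ≤ a^2/δ := by positivity
          nlinarith [mul_le_mul_of_nonneg_left hsq hpos]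
        nlinarith
      have hempty : Set.Ioc xn (1/4 : ℝ) = ∅ := Set.Ioc_eq_empty (by linarith)
      rw [Ffun, hempty]
      simp
    · -- large n : use the main estimate
      push_neg at hcase
      obtain ⟨hy1, hy2⟩ := hN n hcase
      have hyxn : y n ≤ xn := by
        rw [hydef, hxndef, hCtdef]
        simp only [Real.exp_sub]
        have h4 : Real.exp (Real.log 4) = 4 := Real.exp_log (by norm_num)
        have hexp1 : (1:ℝ) ≤ Real.exp ((a^2/δ) * (Real.log N) ^ 2) :=
          Real.one_le_exp (by positivity)
        have hE := (Real.exp_pos (-(a^2/δ) * (Real.log n) ^ 2)).le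
        rw [h4]
        nlinarith
      calc Ffun β xn ≤ Ffun β (y n) := by
            rw [Ffun, Ffun]
            exact lintegral_mono_set (Set.Ioc_subset_Ioc_left hyxn)
        _ ≤ ENNReal.ofReal
              (2 * Real.exp ((Real.sqrt (-(δ' * Real.log (y n))) - b) / a)
                * (-Real.log (y n)) + E') := main (y n) (hy0 n) hy1
        _ ≤ (n : ℝ≥0∞) := by
            rw [← ENNReal.ofReal_natCast n]
            exact ENNReal.ofReal_le_ofReal hy2
end
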